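/- Let n ≥ 2 be a natural number, let H ≥ 1 be real, let m₁, m₂ ≥ 0 be reals with m₁ + m₂ ≥ 3n · ln H, and let p₁, p, q₁, q be reals with 0 ≤ p₁ ≤ 1/(2n), 1/n ≤ p < 1, 0 ≤ q₁ ≤ 1/(2n), and 1/n ≤ q < 1. Then m₁ · ln(1/(1 − p)) + m₂ · ln(1/(1 − q)) ≥ m₁ · ln(1/(1 − p₁)) + m₂ · ln(1/(1 − q₁)) + ln H. -/

import Mathlib

lemma gap_aux (n : ℕ) (hn : 2 ≤ n) (a b : ℝ)
    (ha0 : 0 ≤ a) (ha : a ≤ 1 / (2 * n)) (hb : 1 / (n : ℝ) ≤ b) (hb1 : b < 1) :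
    Real.log (1 / (1 - a)) + 1 / (3 * n) ≤ Real.log (1 / (1 - b)) := by
  have hn0 : (0:ℝ) < n := by positivity
  have hn2 : (2:ℝ) ≤ n := by exact_mod_cast hn
  have ha1 : a < 1 := lt_of_le_of_lt ha (by rw [div_lt_one (by positivity)]; nlinarith)
  have h1a : (0:ℝ) < 1 - a := by linarith
  have h1b : (0:ℝ) < 1 - b := by linarith
  -- upper bound on log(1/(1-a))
  have hub : Real.log (1 / (1 - a)) ≤ a / (1 - a) := by
    have := Real.log_le_sub_one_of_pos (show (0:ℝ) < 1 / (1 - a) by positivity)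
    have : Real.log (1 / (1 - a)) ≤ 1 / (1 - a) - 1 := this
    have heq : 1 / (1 - a) - 1 = a / (1 - a) := by field_simp; ring
    linarith [heq ▸ this]
  have hub2 : a / (1 - a) ≤ 2 / (3 * n) := by
    rw [div_le_div_iff₀ h1a (by positivity)]
    have h1 : a ≤ 1 / (2 * n) := ha
    have h2 : (1:ℝ) - a ≥ 1 - 1 / (2 * n) := by linarith
    have h3 : (0:ℝ) < 2 * n := by positivity
    have h1' : a * (2 * n) ≤ 1 := by rwa [le_div_iff₀ h3] at h1
    nlinarith
  -- lower bound on log(1/(1-b))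
  have hlb : b ≤ Real.log (1 / (1 - b)) := by
    have := Real.log_le_sub_one_of_pos h1b
    rw [one_div, Real.log_inv]
    linarith
  have hbn : 1 / (n : ℝ) ≤ b := hb
  have : (2:ℝ) / (3 * n) + 1 / (3 * n) ≤ 1 / n := by
    rw [div_add_div _ _ (by positivity) (by positivity)]
    rw [div_le_div_iff₀ (by positivity) hn0]
    ring_nf
    nlinarith
  linarith

theorem large_mass_constraints_slack
    (n : ℕ) (hn : 2 ≤ n) (H : ℝ) (hH : 1 ≤ H)
    (m₁ m₂ : ℝ) (hm₁ : 0 ≤ m₁) (hm₂ : 0 ≤ m₂)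
    (hsum : 3 * n * Real.log H ≤ m₁ + m₂)
    (p₁ p q₁ q : ℝ)
    (hp₁0 : 0 ≤ p₁) (hp₁ : p₁ ≤ 1 / (2 * n)) (hp : 1 / (n : ℝ) ≤ p) (hp1 : p < 1)
    (hq₁0 : 0 ≤ q₁) (hq₁ : q₁ ≤ 1 / (2 * n)) (hq : 1 / (n : ℝ) ≤ q) (hq1 : q < 1) :
    m₁ * Real.log (1 / (1 - p₁)) + m₂ * Real.log (1 / (1 - q₁)) + Real.log H
      ≤ m₁ * Real.log (1 / (1 - p)) + m₂ * Real.log (1 / (1 - q)) := by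
  have hn0 : (0:ℝ) < n := by positivity
  have h1 := gap_aux n hn p₁ p hp₁0 hp₁ hp hp1
  have h2 := gap_aux n hn q₁ q hq₁0 hq₁ hq hq1
  have hlogH : 0 ≤ Real.log H := Real.log_nonneg hH
  have key : Real.log H ≤ (m₁ + m₂) * (1 / (3 * n)) := by
    calc Real.log H = (3 * n * Real.log H) * (1 / (3 * n)) := by field_simp
      _ ≤ (m₁ + m₂) * (1 / (3 * n)) := by
          apply mul_le_mul_of_nonneg_right hsum (by positivity)
  nlinarith [mul_le_mul_of_nonneg_left h1 hm₁, mul_le_mul_of_nonneg_left h2 hm₂]
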